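/- Let K and L be the linear maps on ℝ⁴ given by K(z₁,z₂,z₃,z₄) = (z₁, (z₂+z₃)/2, (z₂+z₃)/2, z₄) and L(z₁,z₂,z₃,z₄) = (0, (z₂−z₃)/2, (z₃−z₂)/2, 0). Let a ∈ ℝ⁴, t ≥ 0, and let N : ℝ⁴ → ℝ be any function. Suppose ẑ ∈ ℝ⁴ satisfies K(ẑ) = ẑ and (1/2)‖ẑ − K(a)‖₂² + t·N(ẑ) ≤ (1/2)‖w − K(a)‖₂² + t·N(w) for every w ∈ ℝ⁴. Then z* = L(a) + ẑ is a global minimizer over z ∈ ℝ⁴ of the function z ↦ (1/2)‖z − a‖₂² + t·N(K(z)), i.e., (1/2)‖z* − a‖₂² + t·N(K(z*)) ≤ (1/2)‖z − a‖₂² + t·N(K(z)) for every z ∈ ℝ⁴. -/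

import Mathlib

open scoped BigOperators

/-- The Euclidean norm on `ℝⁿ`. -/
noncomputable def euclNorm {n : ℕ} (v : Fin n → ℝ) : ℝ := Real.sqrt (∑ i, v i ^ 2)

/-- The linear map `K(z₁,z₂,z₃,z₄) = (z₁, (z₂+z₃)/2, (z₂+z₃)/2, z₄)` on `ℝ⁴`. -/
noncomputable def Kmap (z : Fin 4 → ℝ) : Fin 4 → ℝ :=
  ![z 0, (z 1 + z 2) / 2, (z 1 + z 2) / 2, z 3]

/-- The linear map `L(z₁,z₂,z₃,z₄) = (0, (z₂−z₃)/2, (z₃−z₂)/2, 0)` on `ℝ⁴`. -/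
noncomputable def Lmap (z : Fin 4 → ℝ) : Fin 4 → ℝ :=
  ![0, (z 1 - z 2) / 2, (z 2 - z 1) / 2, 0]

/-- Proposition 3 of the paper in abstract form: if `ẑ` lies in the range of `K`
(i.e. `K ẑ = ẑ`) and minimizes `(1/2)‖w − K(a)‖² + t·N(w)`, then `L(a) + ẑ` is a
global minimizer of `z ↦ (1/2)‖z − a‖² + t·N(K(z))`. -/
theorem prox_split_K
    (a : Fin 4 → ℝ) (t : ℝ) (ht : 0 ≤ t) (N : (Fin 4 → ℝ) → ℝ)
    (zhat : Fin 4 → ℝ) (hfix : Kmap zhat = zhat)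
    (hmin : ∀ w : Fin 4 → ℝ,
      1 / 2 * euclNorm (zhat - Kmap a) ^ 2 + t * N zhat ≤
      1 / 2 * euclNorm (w - Kmap a) ^ 2 + t * N w) :
    ∀ z : Fin 4 → ℝ,
      1 / 2 * euclNorm ((Lmap a + zhat) - a) ^ 2 + t * N (Kmap (Lmap a + zhat)) ≤
      1 / 2 * euclNorm (z - a) ^ 2 + t * N (Kmap z) := by
  intro z
  have hsq : ∀ v : Fin 4 → ℝ, euclNorm v ^ 2 = ∑ i, v i ^ 2 := by
    intro v
    exact Real.sq_sqrt (Finset.sum_nonneg fun i _ => sq_nonneg _)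
  have hz12 : zhat 1 = zhat 2 := by
    have e1 := congrFun hfix 1
    have e2 := congrFun hfix 2
    simp [Kmap] at e1 e2
    linarith
  have hK : Kmap (Lmap a + zhat) = zhat := by
    funext i
    fin_cases i <;> simp [Kmap, Lmap] <;> linarith [hz12]
  rw [hK]
  have h := hmin (Kmap z)
  have hA : euclNorm ((Lmap a + zhat) - a) ^ 2 = euclNorm (zhat - Kmap a) ^ 2 := by
    rw [hsq, hsq, Fin.sum_univ_four, Fin.sum_univ_four]
    simp [Kmap, Lmap, Matrix.vecHead, Matrix.vecTail]
    have h3 : zhat (Fin.succ 2) = zhat 3 := rfl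
    ring
  have hB : euclNorm (Kmap z - Kmap a) ^ 2 ≤ euclNorm (z - a) ^ 2 := by
    rw [hsq, hsq, Fin.sum_univ_four, Fin.sum_univ_four]
    simp [Kmap, Matrix.vecHead, Matrix.vecTail]
    nlinarith [sq_nonneg ((z 1 - a 1) - (z 2 - a 2))]
  rw [hA]
  linarith
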